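/- Fix λ > 0 and define λ₁ := 1/(1 + 1/(λ + 1)) and λ_n := 1/(1 + 1/(λ + λ_{n−1})) for n > 1. Let G₀, G₁, …, G_n and R₁, …, R_n be relations on the real Hilbert space H = L²([0,∞); ℝ), where every G_k is 1-input strictly incrementally positive and every R_k has incremental secant gain λ. Define Z₀ := (G₀)⁻¹ and Z_k := (G_k + (R_k + Z_{k−1})⁻¹)⁻¹ for k = 1, …, n. Then Z_n has incremental secant gain λ_n, i.e. λ_n⟪i₁−i₂, v₁−v₂⟫ ≥ ‖v₁−v₂‖² for all (i₁,v₁),(i₂,v₂) ∈ Z_n. -/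
import Mathlib


open MeasureTheory RealInnerProductSpace

noncomputable section

/-- The real Hilbert space `H = L²([0,∞); ℝ)`. -/
abbrev H : Type := Lp ℝ 2 (volume.restrict (Set.Ici (0:ℝ)))

/-- The sum of two relations: `A + B = {(x, y + z) : (x, y) ∈ A, (x, z) ∈ B}`. -/
def relAdd (A B : Set (H × H)) : Set (H × H) :=
  {p | ∃ y z : H, (p.1, y) ∈ A ∧ (p.1, z) ∈ B ∧ p.2 = y + z}

/-- The relational inverse `A⁻¹ = {(y, u) : (u, y) ∈ A}`. -/
def relInv (A : Set (H × H)) : Set (H × H) := {p | (p.2, p.1) ∈ A}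

/-- `A` is `μ`-input strictly incrementally positive (`μ`-coercive). -/
def InputStrictlyPositive (A : Set (H × H)) (μ : ℝ) : Prop :=
  ∀ u₁ y₁ u₂ y₂ : H, (u₁, y₁) ∈ A → (u₂, y₂) ∈ A →
    ⟪u₁ - u₂, y₁ - y₂⟫ ≥ μ * ‖u₁ - u₂‖ ^ 2

/-- `A` has incremental secant gain `γ` (is `1/γ`-output strictly incrementally
positive, i.e. `(1/γ)`-cocoercive). -/
def HasSecantGain (A : Set (H × H)) (γ : ℝ) : Prop :=
  ∀ u₁ y₁ u₂ y₂ : H, (u₁, y₁) ∈ A → (u₂, y₂) ∈ A →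
    γ * ⟪u₁ - u₂, y₁ - y₂⟫ ≥ ‖y₁ - y₂‖ ^ 2

/-- The sequence `λ_n`, with `λ₁ = 1/(1 + 1/(λ + 1))` and
`λ_n = 1/(1 + 1/(λ + λ_{n−1}))` for `n > 1` (the value at `0` is set to `1`,
which makes the `n = 1` case agree with the definition). -/
def lamSeq (lam : ℝ) : ℕ → ℝ
  | 0 => 1
  | n + 1 => 1 / (1 + 1 / (lam + lamSeq lam n))

lemma lamSeq_pos {lam : ℝ} (hlam : 0 < lam) : ∀ k, 0 < lamSeq lam k := by
  intro k
  induction k with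
  | zero => norm_num [lamSeq]
  | succ k ih =>
    have h1 : 0 < lam + lamSeq lam k := by linarith
    have h2 : 0 < 1 + 1 / (lam + lamSeq lam k) := by positivity
    simpa [lamSeq] using one_div_pos.mpr h2

lemma gain_relInv_of_input {A : Set (H × H)} {μ : ℝ} (hμ : 0 < μ)
    (h : InputStrictlyPositive A μ) : HasSecantGain (relInv A) (1 / μ) := by
  intro u₁ y₁ u₂ y₂ h₁ h₂
  have := h y₁ u₁ y₂ u₂ h₁ h₂
  rw [real_inner_comm] at this
  rw [ge_iff_le, div_mul_eq_mul_div, le_div_iff₀ hμ]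
  nlinarith [this]

lemma input_relInv_of_gain {A : Set (H × H)} {γ : ℝ} (hγ : 0 < γ)
    (h : HasSecantGain A γ) : InputStrictlyPositive (relInv A) (1 / γ) := by
  intro u₁ y₁ u₂ y₂ h₁ h₂
  have := h y₁ u₁ y₂ u₂ h₁ h₂
  rw [real_inner_comm] at this
  rw [ge_iff_le, div_mul_eq_mul_div, div_le_iff₀ hγ]
  nlinarith [this]

lemma input_relAdd {A B : Set (H × H)} {μ ν : ℝ}
    (hA : InputStrictlyPositive A μ) (hB : InputStrictlyPositive B ν) :
    InputStrictlyPositive (relAdd A B) (μ + ν) := by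
  rintro u₁ y₁ u₂ y₂ ⟨a₁, b₁, ha₁, hb₁, rfl⟩ ⟨a₂, b₂, ha₂, hb₂, rfl⟩
  have h1 := hA u₁ a₁ u₂ a₂ ha₁ ha₂
  have h2 := hB u₁ b₁ u₂ b₂ hb₁ hb₂
  have : (a₁ + b₁) - (a₂ + b₂) = (a₁ - a₂) + (b₁ - b₂) := by abel
  rw [this, inner_add_right]
  linarith

lemma gain_relAdd {A B : Set (H × H)} {γ δ : ℝ} (hγ : 0 < γ) (hδ : 0 < δ)
    (hA : HasSecantGain A γ) (hB : HasSecantGain B δ) :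
    HasSecantGain (relAdd A B) (γ + δ) := by
  rintro u₁ y₁ u₂ y₂ ⟨a₁, b₁, ha₁, hb₁, rfl⟩ ⟨a₂, b₂, ha₂, hb₂, rfl⟩
  have h1 := hA u₁ a₁ u₂ a₂ ha₁ ha₂
  have h2 := hB u₁ b₁ u₂ b₂ hb₁ hb₂
  have hs : (a₁ + b₁) - (a₂ + b₂) = (a₁ - a₂) + (b₁ - b₂) := by abel
  rw [hs, inner_add_right]
  have hn : ‖(a₁ - a₂) + (b₁ - b₂)‖ ≤ ‖a₁ - a₂‖ + ‖b₁ - b₂‖ := norm_add_le _ _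
  have hn2 : ‖(a₁ - a₂) + (b₁ - b₂)‖ ^ 2 ≤ (‖a₁ - a₂‖ + ‖b₁ - b₂‖) ^ 2 := by
    have := norm_nonneg ((a₁ - a₂) + (b₁ - b₂))
    nlinarith
  set a := ‖a₁ - a₂‖ with ha
  set b := ‖b₁ - b₂‖ with hb
  have hap : 0 ≤ a := norm_nonneg _
  have hbp : 0 ≤ b := norm_nonneg _
  nlinarith [sq_nonneg (δ * a - γ * b), mul_pos hγ hδ,
    mul_le_mul_of_nonneg_left h1 hδ.le, mul_le_mul_of_nonneg_left h2 hγ.le]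

theorem chain_secant_gain (lam : ℝ) (hlam : 0 < lam) (n : ℕ) (hn : 1 ≤ n)
    (G R Z : ℕ → Set (H × H))
    (hG : ∀ k, k ≤ n → InputStrictlyPositive (G k) 1)
    (hR : ∀ k, 1 ≤ k → k ≤ n → HasSecantGain (R k) lam)
    (hZ0 : Z 0 = relInv (G 0))
    (hZk : ∀ k, 1 ≤ k → k ≤ n →
      Z k = relInv (relAdd (G k) (relInv (relAdd (R k) (Z (k - 1)))))) :
    HasSecantGain (Z n) (lamSeq lam n) := by
  suffices h : ∀ k, k ≤ n → HasSecantGain (Z k) (lamSeq lam k) from h n le_rfl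
  intro k
  induction k with
  | zero =>
    intro _
    have := gain_relInv_of_input one_pos (hG 0 (Nat.zero_le n))
    rw [hZ0]
    simpa [lamSeq] using this
  | succ k ih =>
    intro hkn
    have hk : k ≤ n := by omega
    have hZgain := ih hk
    have hlsk := lamSeq_pos hlam k
    have hsum : 0 < lam + lamSeq lam k := by linarith
    have g1 : HasSecantGain (relAdd (R (k + 1)) (Z k)) (lam + lamSeq lam k) :=
      gain_relAdd hlam hlsk (hR (k + 1) (by omega) hkn) hZgain
    have i1 : InputStrictlyPositive (relInv (relAdd (R (k + 1)) (Z k)))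
        (1 / (lam + lamSeq lam k)) := input_relInv_of_gain hsum g1
    have i2 : InputStrictlyPositive
        (relAdd (G (k + 1)) (relInv (relAdd (R (k + 1)) (Z k))))
        (1 + 1 / (lam + lamSeq lam k)) :=
      input_relAdd (hG (k + 1) hkn) i1
    have hpos : 0 < 1 + 1 / (lam + lamSeq lam k) := by positivity
    have := gain_relInv_of_input hpos i2
    rw [hZk (k + 1) (by omega) hkn]
    simpa [lamSeq] using this


end
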